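/- The product poset [2] × [2] × [2] with its minimal and maximal elements removed admits a surjective order-preserving map with connected fibers (a contraction) onto the 4-element poset with two minimal elements each below both of two maximal elements (the crown poset Ã₃). -/

import Mathlib

open Function

/-- The comparability graph of a poset. -/
def compGraph (P : Type*) [PartialOrder P] : SimpleGraph P where
  Adj x y := x ≠ y ∧ (x ≤ y ∨ y ≤ x)
  symm := ⟨fun x y h => ⟨h.1.symm, h.2.symm⟩⟩
  loopless := ⟨fun x h => h.1 rfl⟩

/-- A contraction of posets: a surjective monotone map with connected fibers. -/
def IsContraction {P Q : Type*} [PartialOrder P] [PartialOrder Q] (c : P → Q) : Prop :=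
  Monotone c ∧ Function.Surjective c ∧
    ∀ q : Q, ((compGraph P).induce (c ⁻¹' {q})).Connected

/-- An elementary contraction: exactly one fiber has two elements, all others are singletons. -/
def IsElementaryContraction {P Q : Type*} [PartialOrder P] [PartialOrder Q] (c : P → Q) : Prop :=
  IsContraction c ∧
    ∃ x : Q, (c ⁻¹' {x}).ncard = 2 ∧ ∀ r : Q, r ≠ x → (c ⁻¹' {r}).ncard = 1

/-- The crown poset `Ã₃`: two minimal elements `m₁, m₂`, each below both of the two maximal
elements `M₁, M₂`, and no other strict relations. -/
inductive Crown : Type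
  | m1 | m2 | M1 | M2
deriving DecidableEq

instance : Fintype Crown where
  elems := {.m1, .m2, .M1, .M2}
  complete := by intro x; cases x <;> decide

/-- The order on the crown, as a boolean relation. -/
def Crown.leB : Crown → Crown → Bool
  | x, y => x == y || ((x == .m1 || x == .m2) && (y == .M1 || y == .M2))

instance : PartialOrder Crown where
  le x y := Crown.leB x y = true
  le_refl := by exact (by decide : ∀ a : Crown, Crown.leB a a = true)
  le_trans := by exact (by decide :
    ∀ a b c : Crown, Crown.leB a b = true → Crown.leB b c = true → Crown.leB a c = true)
  le_antisymm := by exact (by decide :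
    ∀ a b : Crown, Crown.leB a b = true → Crown.leB b a = true → a = b)


abbrev P6 := {x : Fin 2 × Fin 2 × Fin 2 // x ≠ (0, 0, 0) ∧ x ≠ (1, 1, 1)}

instance : @DecidableRel Crown Crown (· ≤ ·) := fun a b => decEq (Crown.leB a b) true

def cmap (x : P6) : Crown :=
  if x.val = (1,0,0) then .m1
  else if x.val = (0,1,0) then .m2
  else if x.val = (1,1,0) then .M1
  else .M2

def x100 : P6 := ⟨(1,0,0), by decide⟩
def x010 : P6 := ⟨(0,1,0), by decide⟩
def x110 : P6 := ⟨(1,1,0), by decide⟩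
def x001 : P6 := ⟨(0,0,1), by decide⟩
def x011 : P6 := ⟨(0,1,1), by decide⟩
def x101 : P6 := ⟨(1,0,1), by decide⟩

lemma cmap_mono : Monotone cmap := fun a b h =>
  (by decide : ∀ a b : P6, a ≤ b → cmap a ≤ cmap b) a b h

lemma cmap_surj : Function.Surjective cmap := by decide

lemma cmap_conn : ∀ q, ((compGraph P6).induce (cmap ⁻¹' {q})).Connected := by
  intro q
  rw [SimpleGraph.connected_iff_exists_forall_reachable]
  cases q
  · refine ⟨⟨x100, rfl⟩, ?_⟩
    rintro ⟨a, ha⟩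
    have : a = x100 := (by decide : ∀ a : P6, cmap a = .m1 → a = x100) a ha
    subst this; exact SimpleGraph.Reachable.refl _
  · refine ⟨⟨x010, rfl⟩, ?_⟩
    rintro ⟨a, ha⟩
    have : a = x010 := (by decide : ∀ a : P6, cmap a = .m2 → a = x010) a ha
    subst this; exact SimpleGraph.Reachable.refl _
  · refine ⟨⟨x110, rfl⟩, ?_⟩
    rintro ⟨a, ha⟩
    have : a = x110 := (by decide : ∀ a : P6, cmap a = .M1 → a = x110) a ha
    subst this; exact SimpleGraph.Reachable.refl _
  · refine ⟨⟨x001, rfl⟩, ?_⟩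
    rintro ⟨a, ha⟩
    have h3 : a = x001 ∨ a = x011 ∨ a = x101 :=
      (by decide : ∀ a : P6, cmap a = .M2 → a = x001 ∨ a = x011 ∨ a = x101) a ha
    rcases h3 with h | h | h <;> subst h
    · exact SimpleGraph.Reachable.refl _
    · exact SimpleGraph.Adj.reachable
        (And.intro (by decide : x001 ≠ x011) (Or.inl (by decide : x001 ≤ x011)))
    · exact SimpleGraph.Adj.reachable
        (And.intro (by decide : x001 ≠ x101) (Or.inl (by decide : x001 ≤ x101)))

/-- The poset `[2] × [2] × [2]` with its minimal and maximal elements removed admits a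
contraction onto the crown poset `Ã₃`. -/
theorem cube_minus_bounds_contracts_onto_crown :
    ∃ c : {x : Fin 2 × Fin 2 × Fin 2 // x ≠ (0, 0, 0) ∧ x ≠ (1, 1, 1)} → Crown,
      IsContraction c := by
  exact ⟨cmap, cmap_mono, cmap_surj, cmap_conn⟩
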